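/- Let g and g' be flows on a finite path set P with the same delays d : P → ℝ≥0, where g' is obtained from g by deleting rate from slowest flow-carrying paths with total deleted rate δ', and g'' is obtained from g by the same greedy procedure with total deleted rate δ'' ≥ δ'. Then M(g'') ≤ M(g'). -/

import Mathlib

noncomputable def thr {P : Type*} [Fintype P] (x : P → ℝ) : ℝ := ∑ p, x p

noncomputable def maxDelay {P : Type*} [Fintype P] (x d : P → ℝ) : ℝ :=
  sSup (d '' {p | 0 < x p})

/-- `GreedyDeletion d f N δ` : the sequence `f 0, f 1, ..., f N` is produced by, at each
step `n < N`, removing rate `δ n > 0` from a currently-slowest flow-carrying path. -/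
def GreedyDeletion {P : Type*} [Fintype P] [DecidableEq P]
    (d : P → ℝ) (f : ℕ → P → ℝ) (N : ℕ) (δ : ℕ → ℝ) : Prop :=
  ∀ n < N, 0 < δ n ∧ ∃ p : P, 0 < f n p ∧ d p = maxDelay (f n) d ∧
    δ n ≤ f n p ∧ f (n + 1) = Function.update (f n) p (f n p - δ n)

section Aux

variable {P : Type*} [Fintype P] [DecidableEq P]

lemma aux_bddAbove (x d : P → ℝ) : BddAbove (d '' {p | 0 < x p}) :=
  (Set.toFinite _).bddAbove

lemma le_maxDelay (x d : P → ℝ) {p : P} (hp : 0 < x p) : d p ≤ maxDelay x d :=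
  le_csSup (aux_bddAbove x d) ⟨p, hp, rfl⟩

lemma maxDelay_nonneg (x d : P → ℝ) (hd : ∀ p, 0 ≤ d p) : 0 ≤ maxDelay x d := by
  by_cases h : {p | 0 < x p}.Nonempty
  · obtain ⟨p, hp⟩ := h
    exact le_trans (hd p) (le_maxDelay x d hp)
  · rw [Set.not_nonempty_iff_eq_empty] at h
    simp [maxDelay, h, Real.sSup_empty]

lemma maxDelay_mono (x y d : P → ℝ) (hd : ∀ p, 0 ≤ d p)
    (h : ∀ q, 0 < x q → 0 < y q) : maxDelay x d ≤ maxDelay y d := by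
  by_cases hx : {p | 0 < x p}.Nonempty
  · exact csSup_le_csSup (aux_bddAbove y d)
      (hx.image d) (Set.image_mono (f := d) fun q hq => h q hq)
  · rw [Set.not_nonempty_iff_eq_empty] at hx
    rw [maxDelay, hx]
    simpa [Real.sSup_empty] using maxDelay_nonneg y d hd

lemma exists_eq_maxDelay (x d : P → ℝ) (hne : {p | 0 < x p}.Nonempty) :
    ∃ p, 0 < x p ∧ d p = maxDelay x d := by
  have hfin : (d '' {p | 0 < x p}).Finite := Set.toFinite _
  have hmem : maxDelay x d ∈ d '' {p | 0 < x p} :=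
    (hne.image d).csSup_mem hfin
  obtain ⟨p, hp, hdp⟩ := hmem
  exact ⟨p, hp, hdp⟩

lemma greedy_props (d : P → ℝ) (hd : ∀ p, 0 ≤ d p)
    (g : P → ℝ) (hg : ∀ p, 0 ≤ g p) (f : ℕ → P → ℝ) (δ : ℕ → ℝ)
    (h0 : f 0 = g) :
    ∀ N, GreedyDeletion d f N δ →
      (∀ q, 0 ≤ f N q) ∧ (∀ q, f N q ≤ g q) ∧
      (∀ q, d q < maxDelay (f N) d → f N q = g q) ∧
      (∑ n ∈ Finset.range N, δ n) = ∑ q, (g q - f N q) := by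
  intro N
  induction N with
  | zero =>
    intro _
    refine ⟨fun q => h0 ▸ hg q, fun q => h0 ▸ le_refl _, fun q _ => by rw [h0], by simp [h0]⟩
  | succ N ih =>
    intro hgreedy
    have hprev : GreedyDeletion d f N δ := fun n hn => hgreedy n (Nat.lt_succ_of_lt hn)
    obtain ⟨hpos, hle, hinv, hsum⟩ := ih hprev
    obtain ⟨hδ, p, hp, hdp, hδle, hupd⟩ := hgreedy N (Nat.lt_succ_self N)
    have hval : ∀ q, f (N + 1) q = if q = p then f N p - δ N else f N q := by
      intro q
      rw [hupd]
      by_cases h : q = p <;> simp [h, Function.update]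
    have hposN : ∀ q, 0 ≤ f (N + 1) q := by
      intro q
      rw [hval q]
      split
      · linarith
      · exact hpos q
    have hsupp : ∀ q, 0 < f (N + 1) q → 0 < f N q := by
      intro q hq
      rw [hval q] at hq
      by_cases h : q = p
      · rw [if_pos h] at hq; subst h; linarith
      · rwa [if_neg h] at hq
    have hMmono : maxDelay (f (N + 1)) d ≤ maxDelay (f N) d :=
      maxDelay_mono _ _ d hd hsupp
    refine ⟨hposN, ?_, ?_, ?_⟩
    · intro q
      rw [hval q]
      split
      · next h => subst h; linarith [hle q]
      · exact hle q
    · intro q hq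
      have hqp : q ≠ p := by
        intro h
        subst h
        rw [hdp] at hq
        linarith
      rw [hval q, if_neg hqp]
      exact hinv q (lt_of_lt_of_le hq hMmono)
    · rw [Finset.sum_range_succ, hsum]
      have : ∀ q, g q - f (N + 1) q = (g q - f N q) + (if q = p then δ N else 0) := by
        intro q
        rw [hval q]
        by_cases h : q = p <;> simp [h] <;> ring
      rw [Finset.sum_congr rfl fun q _ => this q, Finset.sum_add_distrib]
      simp

end Aux

theorem stmt_15 {P : Type*} [Fintype P] [DecidableEq P]
    (d : P → ℝ) (hd : ∀ p, 0 ≤ d p)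
    (g : P → ℝ) (hg : ∀ p, 0 ≤ g p)
    (N' N'' : ℕ) (f' f'' : ℕ → P → ℝ) (δ' δ'' : ℕ → ℝ)
    (h0' : f' 0 = g) (h0'' : f'' 0 = g)
    (hgreedy' : GreedyDeletion d f' N' δ')
    (hgreedy'' : GreedyDeletion d f'' N'' δ'')
    (htotals : (∑ n ∈ Finset.range N', δ' n) ≤ ∑ n ∈ Finset.range N'', δ'' n) :
    maxDelay (f'' N'') d ≤ maxDelay (f' N') d := by
  obtain ⟨hpos', hle', hinv', hsum'⟩ := greedy_props d hd g hg f' δ' h0' N' hgreedy'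
  obtain ⟨hpos'', hle'', hinv'', hsum''⟩ := greedy_props d hd g hg f'' δ'' h0'' N'' hgreedy''
  set M' := maxDelay (f' N') d with hM'
  set M'' := maxDelay (f'' N'') d with hM''
  by_contra hcon
  push_neg at hcon
  -- M' < M''
  have hM'nonneg : 0 ≤ M' := maxDelay_nonneg _ d hd
  have hM''pos : 0 < M'' := lt_of_le_of_lt hM'nonneg hcon
  have hne : {p | 0 < f'' N'' p}.Nonempty := by
    by_contra h
    rw [Set.not_nonempty_iff_eq_empty] at h
    have : M'' = 0 := by rw [hM'', maxDelay, h]; simp [Real.sSup_empty]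
    linarith
  obtain ⟨p, hp, hdp⟩ := exists_eq_maxDelay (f'' N'') d hne
  -- A = paths with delay > M'
  set A : Finset P := Finset.univ.filter (fun q => M' < d q) with hA
  have hpA : p ∈ A := by
    rw [hA, Finset.mem_filter]
    exact ⟨Finset.mem_univ p, hdp ▸ hcon⟩
  -- zero on A for f'
  have hzero' : ∀ q ∈ A, f' N' q = 0 := by
    intro q hq
    rw [hA, Finset.mem_filter] at hq
    by_contra h
    have hq' : 0 < f' N' q := lt_of_le_of_ne (hpos' q) (Ne.symm h)
    have := le_maxDelay (f' N') d hq'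
    rw [← hM'] at this
    linarith [hq.2]
  -- R' ≥ ∑_{A} g
  have hR' : ∑ q ∈ A, g q ≤ ∑ n ∈ Finset.range N', δ' n := by
    rw [hsum']
    calc ∑ q ∈ A, g q = ∑ q ∈ A, (g q - f' N' q) :=
          Finset.sum_congr rfl fun q hq => by rw [hzero' q hq]; ring
      _ ≤ ∑ q ∈ Finset.univ, (g q - f' N' q) :=
          Finset.sum_le_sum_of_subset_of_nonneg (Finset.subset_univ A)
            (fun q _ _ => by linarith [hle' q])
  -- R'' restricted to A
  have hoffA : ∀ q ∈ Finset.univ, q ∉ A → g q - f'' N'' q = 0 := by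
    intro q _ hq
    rw [hA, Finset.mem_filter] at hq
    push_neg at hq
    have hdq : d q ≤ M' := hq (Finset.mem_univ q)
    have : f'' N'' q = g q := hinv'' q (lt_of_le_of_lt hdq hcon)
    rw [this]; ring
  have hR'' : ∑ n ∈ Finset.range N'', δ'' n = ∑ q ∈ A, (g q - f'' N'' q) := by
    rw [hsum'', ← Finset.sum_subset (Finset.subset_univ A) hoffA]
  have hstrict : ∑ q ∈ A, (g q - f'' N'' q) < ∑ q ∈ A, g q := by
    apply Finset.sum_lt_sum (fun q _ => by linarith [hpos'' q])
    exact ⟨p, hpA, by linarith⟩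
  linarith
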